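/- Let K be a field, n ≥ 2, t₁,…,t_n ∈ K with t_j ≠ 0 and t_j ≠ 1 for all j, and let c : K → K be a ring homomorphism with c(t_j) = t_j⁻¹ for all j. Then for every index i with 1 ≤ i ≤ n−1, the matrix γ = U_{n;i}(t_{i+1})⁻¹ satisfies Ω((i,i+1))·γ⁻¹ = γ̄ᵀ·Ω(ι), where (i,i+1) is the transposition of i and i+1. -/

import Mathlib

open Matrix

/-- `U K n i t` is the `n × n` matrix over `K` (1-indexed rows/columns `1,…,n`) that equals
the identity matrix except that its `2 × 2` block in rows `i, i+1` and columns `i, i+1`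
is `((1-t, 1), (t, 0))`.  A row index `r : Fin n` corresponds to the 1-indexed row `r.val + 1`. -/
def GassnerU (K : Type*) [CommRing K] (n : ℕ) (i : ℕ) (t : K) : Matrix (Fin n) (Fin n) K :=
  Matrix.of fun r c =>
    if r.val + 1 = i ∧ c.val + 1 = i then 1 - t
    else if r.val + 1 = i ∧ c.val = i then 1
    else if r.val = i ∧ c.val + 1 = i then t
    else if r.val = i ∧ c.val = i then 0
    else if r = c then 1 else 0

/-- `Ω(τ)`: the `n × n` matrix with diagonal entries `(1 - t (τ r))⁻¹`, entries below the
diagonal equal to `1`, and entries above the diagonal equal to `0`. -/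
def GassnerOmega {K : Type*} [Field K] {n : ℕ} (t : Fin n → K) (τ : Equiv.Perm (Fin n)) :
    Matrix (Fin n) (Fin n) K :=
  Matrix.of fun r c => if r = c then (1 - t (τ r))⁻¹ else if c < r then 1 else 0

private def Ux {K : Type*} [CommRing K] {n : ℕ} (p q : Fin n) (s : K) :
    Matrix (Fin n) (Fin n) K :=
  Matrix.of fun r c =>
    if r = p ∧ c = p then 1 - s else if r = p ∧ c = q then 1
    else if r = q ∧ c = p then s else if r = q ∧ c = q then 0
    else if r = c then 1 else 0

private def Vx {K : Type*} [Field K] {n : ℕ} (p q : Fin n) (s : K) :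
    Matrix (Fin n) (Fin n) K :=
  Matrix.of fun r c =>
    if r = p ∧ c = p then 0 else if r = p ∧ c = q then s⁻¹
    else if r = q ∧ c = p then 1 else if r = q ∧ c = q then 1 - s⁻¹
    else if r = c then 1 else 0

private def Wx {K : Type*} [CommRing K] {n : ℕ} (p q : Fin n) (s : K) :
    Matrix (Fin n) (Fin n) K :=
  Matrix.of fun r c =>
    if r = p ∧ c = p then 0 else if r = p ∧ c = q then 1
    else if r = q ∧ c = p then s else if r = q ∧ c = q then 1 - s
    else if r = c then 1 else 0

private lemma sum_one' {K : Type*} [CommRing K] {n : ℕ} (a : Fin n)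
    (f : Fin n → K) (hf : ∀ k, k ≠ a → f k = 0) : ∑ k, f k = f a :=
  Finset.sum_eq_single_of_mem a (Finset.mem_univ a) (fun k _ hk => hf k hk)

private lemma sum_two' {K : Type*} [CommRing K] {n : ℕ} (p q : Fin n) (hne : p ≠ q)
    (f : Fin n → K) (hf : ∀ k, k ≠ p → k ≠ q → f k = 0) :
    ∑ k, f k = f p + f q :=
  Finset.sum_eq_add_of_mem p q (Finset.mem_univ p) (Finset.mem_univ q) hne
    (fun k _ hk => hf k hk.1 hk.2)

private lemma keyOmega {K : Type*} [Field K] {n : ℕ} (t : Fin n → K) (ht1 : ∀ j, t j ≠ 1)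
    (p q : Fin n) (hpq : (p : ℕ) + 1 = (q : ℕ)) :
    GassnerOmega t (Equiv.swap p q) * Ux p q (t q) =
      Wx p q (t q) * GassnerOmega t 1 := by
  have hne : p ≠ q := by rw [Fin.ne_iff_vne]; omega
  have hqp : q ≠ p := Ne.symm hne
  have hplt : p < q := by rw [Fin.lt_def]; omega
  have hnqlt : ¬ q < p := by rw [Fin.lt_def]; omega
  have h1s : 1 - t q ≠ 0 := sub_ne_zero_of_ne (Ne.symm (ht1 q))
  have h1p : 1 - t p ≠ 0 := sub_ne_zero_of_ne (Ne.symm (ht1 p))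
  ext r c
  rw [Matrix.mul_apply, Matrix.mul_apply]
  -- reduce LHS sum
  have L : (∑ k, GassnerOmega t (Equiv.swap p q) r k * Ux p q (t q) k c) =
      (if c = p then GassnerOmega t (Equiv.swap p q) r p * (1 - t q)
          + GassnerOmega t (Equiv.swap p q) r q * (t q)
        else if c = q then GassnerOmega t (Equiv.swap p q) r p
        else GassnerOmega t (Equiv.swap p q) r c) := by
    by_cases hcp : c = p
    · rw [sum_two' p q hne _ (fun k h1 h2 => by simp [Ux, hcp, h1, h2])]
      simp [Ux, hcp, hne, hqp]
    · by_cases hcq : c = q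
      · rw [sum_one' p _ (fun k hk => by simp [Ux, hcq, hk, hqp]; try tauto)]
        simp [Ux, hcq, hcp, hne, hqp]; try tauto
      · rw [sum_one' c _ (fun k hk => by simp [Ux, hk, hcp, hcq])]
        simp [Ux, hcp, hcq, fun h : c = p => hcp h]
  have R : (∑ k, Wx p q (t q) r k * GassnerOmega t 1 k c) =
      (if r = p then GassnerOmega t 1 q c
        else if r = q then (t q) * GassnerOmega t 1 p c
          + (1 - t q) * GassnerOmega t 1 q c
        else GassnerOmega t 1 r c) := by
    by_cases hrp : r = p
    · rw [sum_one' q _ (fun k hk => by simp [Wx, hrp, hk, hne]; try tauto)]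
      simp [Wx, hrp, hne]; try tauto
    · by_cases hrq : r = q
      · rw [sum_two' p q hne _ (fun k h1 h2 => by simp [Wx, hrq, h1, h2, hqp]; try tauto)]
        simp [Wx, hrq, hne, hqp]
      · rw [sum_one' r _ (fun k hk => by simp [Wx, hrp, hrq, fun h : k = r => hk h]; tauto)]
        simp [Wx, hrp, hrq]
  rw [L, R]
  have hvlt : ∀ a b : Fin n, a < b ↔ (a : ℕ) < (b : ℕ) := fun _ _ => Fin.lt_def
  have hvne : ∀ a b : Fin n, ¬ a = b → ¬ (a : ℕ) = (b : ℕ) := fun a b h hh => h (Fin.ext hh)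
  by_cases hrp : r = p
  · by_cases hcp : c = p
    · simp only [hrp, hcp, if_pos rfl, GassnerOmega, Matrix.of_apply,
        Equiv.swap_apply_left, Equiv.Perm.one_apply]
      rw [if_neg hne, if_neg hnqlt, if_neg hqp, if_pos hplt]
      simp [inv_mul_cancel₀ h1s]
    · by_cases hcq : c = q
      · simp [hrp, hcq, hne, hqp, GassnerOmega, Equiv.swap_apply_left]
      · have hqc : q ≠ c := fun h => hcq h.symm
        have hpc : p ≠ c := fun h => hcp h.symm
        simp only [hrp, if_neg hcp, if_neg hcq, if_pos rfl, GassnerOmega,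
          Matrix.of_apply, if_neg hpc, if_neg hqc]
        by_cases hlt : c < p
        · have h2 : c < q := by
            rw [hvlt] at hlt ⊢; omega
          rw [if_pos hlt, if_pos h2]
          simp
        · have h2 : ¬ c < q := by
            have h3 := hvne _ _ hcp
            rw [hvlt] at hlt ⊢; omega
          rw [if_neg hlt, if_neg h2]
          simp
  · by_cases hrq : r = q
    · by_cases hcp : c = p
      · simp only [hrq, hcp, if_pos rfl, if_neg hqp, GassnerOmega, Matrix.of_apply,
          Equiv.swap_apply_right, if_pos hplt, if_neg hne, Equiv.Perm.one_apply]
        simp [hne, hqp]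
        ring
      · by_cases hcq : c = q
        · simp only [hrq, hcq, if_neg hcp, if_pos rfl, if_neg hqp, GassnerOmega,
            Matrix.of_apply, if_pos hplt, Equiv.Perm.one_apply, if_neg hne, if_neg hnqlt]
          simp [hne, hqp]
          field_simp
        · have hqc : q ≠ c := fun h => hcq h.symm
          have hpc : p ≠ c := fun h => hcp h.symm
          simp only [hrq, if_neg hcp, if_neg hcq, if_neg hqp, if_pos rfl, GassnerOmega,
            Matrix.of_apply, if_neg hqc, if_neg hpc, Equiv.Perm.one_apply]
          by_cases hlt : c < p
          · have h2 : c < q := by rw [hvlt] at hlt ⊢; omega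
            simp [hlt, h2, hne, hqp]
            try ring
          · have h2 : ¬ c < q := by
              have h3 := hvne _ _ hcp
              rw [hvlt] at hlt ⊢; omega
            simp [hlt, h2, hne, hqp]
            try ring
    · by_cases hcp : c = p
      · simp only [hcp, if_pos rfl, if_neg hrp, if_neg hrq, GassnerOmega, Matrix.of_apply,
          Equiv.Perm.one_apply]
        by_cases hlt : p < r
        · have h2 : q < r := by
            have h3 := hvne _ _ hrq
            rw [hvlt] at hlt ⊢; omega
          simp [hlt, h2, hrp, hrq, hne, hqp]
          try ring
        · have h2 : ¬ q < r := by rw [hvlt] at hlt ⊢; omega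
          simp [hlt, h2, hrp, hrq, hne, hqp]
          try ring
      · by_cases hcq : c = q
        · simp only [hcq, if_neg hcp, if_pos rfl, if_neg hrp, if_neg hrq, GassnerOmega,
            Matrix.of_apply, Equiv.Perm.one_apply]
          by_cases hlt : p < r
          · have h2 : q < r := by
              have h3 := hvne _ _ hrq
              rw [hvlt] at hlt ⊢; omega
            simp [hlt, h2, hrp, hrq, hne, hqp]
            try ring
          · have h2 : ¬ q < r := by rw [hvlt] at hlt ⊢; omega
            simp [hlt, h2, hrp, hrq, hne, hqp]
            try ring
        · simp only [if_neg hcp, if_neg hcq, if_neg hrp, if_neg hrq, GassnerOmega,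
            Matrix.of_apply, Equiv.swap_apply_of_ne_of_ne hrp hrq, Equiv.Perm.one_apply]


private lemma Ux_mul_Vx {K : Type*} [Field K] {n : ℕ} (p q : Fin n) (hpq : p ≠ q)
    (s : K) (hs : s ≠ 0) : Ux p q s * Vx p q s = 1 := by
  have hqp : q ≠ p := Ne.symm hpq
  ext r c
  rw [Matrix.mul_apply]
  by_cases hcp : c = p
  · rw [sum_two' p q hpq _ (fun k h1 h2 => by simp [Vx, hcp, h1, h2])]
    by_cases hrp : r = p <;> by_cases hrq : r = q <;>
      simp_all [Ux, Vx, Matrix.one_apply]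
  · by_cases hcq : c = q
    · rw [sum_two' p q hpq _ (fun k h1 h2 => by simp [Vx, hcq, h1, h2, hqp])]
      by_cases hrp : r = p <;> by_cases hrq : r = q <;>
        simp_all [Ux, Vx, Matrix.one_apply] <;> field_simp <;> ring
    · rw [sum_one' c _ (fun k hk => by simp [Vx, hk, hcp, hcq])]
      by_cases hrp : r = p <;> by_cases hrq : r = q <;>
        simp_all [Ux, Vx, Matrix.one_apply]

private lemma Vx_mul_Ux {K : Type*} [Field K] {n : ℕ} (p q : Fin n) (hpq : p ≠ q)
    (s : K) (hs : s ≠ 0) : Vx p q s * Ux p q s = 1 := by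
  have hqp : q ≠ p := Ne.symm hpq
  ext r c
  rw [Matrix.mul_apply]
  by_cases hcp : c = p
  · rw [sum_two' p q hpq _ (fun k h1 h2 => by simp [Ux, hcp, h1, h2])]
    by_cases hrp : r = p <;> by_cases hrq : r = q <;>
      simp_all [Ux, Vx, Matrix.one_apply] <;> field_simp <;> ring
  · by_cases hcq : c = q
    · rw [sum_two' p q hpq _ (fun k h1 h2 => by simp [Ux, hcq, h1, h2, hqp])]
      by_cases hrp : r = p <;> by_cases hrq : r = q <;>
        simp_all [Ux, Vx, Matrix.one_apply] <;> field_simp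
    · rw [sum_one' c _ (fun k hk => by simp [Ux, hk, hcp, hcq])]
      by_cases hrp : r = p <;> by_cases hrq : r = q <;>
        simp_all [Ux, Vx, Matrix.one_apply]

private lemma map_transpose_Vx {K : Type*} [Field K] {n : ℕ} (p q : Fin n) (hne : p ≠ q)
    (s : K) (c : K →+* K) (hcs : c s = s⁻¹) :
    ((Vx p q s).map c)ᵀ = Wx p q s := by
  have hqp : q ≠ p := Ne.symm hne
  have h1 : c (s⁻¹) = s := by rw [map_inv₀, hcs, inv_inv]
  have h2 : c (1 - s⁻¹) = 1 - s := by rw [map_sub, _root_.map_one, h1]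
  ext r k
  show c (Vx p q s k r) = Wx p q s r k
  by_cases hkp : k = p <;> by_cases hkq : k = q <;>
    by_cases hrp : r = p <;> by_cases hrq : r = q <;>
      simp_all [Vx, Wx] <;> (try tauto) <;> (split_ifs <;> first | rfl | simp_all)

private lemma glue {K : Type*} [Field K] {n : ℕ} (t : Fin n → K)
    (ht0 : ∀ j, t j ≠ 0) (ht1 : ∀ j, t j ≠ 1)
    (c : K →+* K) (hc : ∀ j, c (t j) = (t j)⁻¹)
    (p q : Fin n) (hpq : (p : ℕ) + 1 = (q : ℕ))
    (U : Matrix (Fin n) (Fin n) K) (hU : U = Ux p q (t q)) :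
    GassnerOmega t (Equiv.swap p q) * (U⁻¹)⁻¹ = ((U⁻¹).map c)ᵀ * GassnerOmega t 1 := by
  subst hU
  have hne : p ≠ q := by rw [Fin.ne_iff_vne]; omega
  have hv : (Ux p q (t q))⁻¹ = Vx p q (t q) :=
    Matrix.inv_eq_right_inv (Ux_mul_Vx p q hne (t q) (ht0 q))
  rw [hv]
  have hvv : (Vx p q (t q))⁻¹ = Ux p q (t q) :=
    Matrix.inv_eq_right_inv (Vx_mul_Ux p q hne (t q) (ht0 q))
  rw [hvv, map_transpose_Vx p q hne (t q) c (hc q)]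
  exact keyOmega t ht1 p q hpq

private lemma gassnerU_eq {K : Type*} [CommRing K] {n i : ℕ}
    (hi1 : i - 1 < n) (hi2 : i < n) (hi : 1 ≤ i) (s : K) :
    GassnerU K n i s = Ux (⟨i - 1, hi1⟩ : Fin n) ⟨i, hi2⟩ s := by
  have e1 : ∀ m : Fin n, (m.val + 1 = i) ↔ m = (⟨i - 1, hi1⟩ : Fin n) := fun m => by
    simp only [Fin.ext_iff]; omega
  have e2 : ∀ m : Fin n, (m.val = i) ↔ m = (⟨i, hi2⟩ : Fin n) := fun m => by
    simp only [Fin.ext_iff]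
  ext r k
  simp only [GassnerU, Ux, Matrix.of_apply, e1, e2]


/-- Unitarity property for a negative generator: for `γ = U_{n;i}(t_{i+1})⁻¹` one has
`Ω((i,i+1)) · γ⁻¹ = γ̄ᵀ · Ω(ι)`, where `γ̄` is the entrywise application of the ring
homomorphism `c` (which satisfies `c (t_j) = t_j⁻¹`). -/
theorem gassner_unitarity_neg_generator {K : Type*} [Field K] (n : ℕ) (hn : 2 ≤ n)
    (t : Fin n → K) (ht0 : ∀ j, t j ≠ 0) (ht1 : ∀ j, t j ≠ 1)
    (c : K →+* K) (hc : ∀ j, c (t j) = (t j)⁻¹)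
    (i : ℕ) (hi1 : 1 ≤ i) (hi2 : i ≤ n - 1) :
    GassnerOmega t (Equiv.swap (⟨i - 1, by omega⟩ : Fin n) ⟨i, by omega⟩) *
        ((GassnerU K n i (t ⟨i, by omega⟩))⁻¹)⁻¹ =
      (((GassnerU K n i (t ⟨i, by omega⟩))⁻¹).map c)ᵀ * GassnerOmega t 1 := by
  exact glue t ht0 ht1 c hc ⟨i - 1, by omega⟩ ⟨i, by omega⟩ (by simp; omega) _
    (gassnerU_eq (by omega) (by omega) hi1 _)
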